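/- Let β be an integer with β ≥ 2 or β ≤ −1, let σ > 0, let φ be a real number with 0 < |φ| < 1, and let n ≥ 2. Define S := β(β − 1) · (σ²/(1 − φ²)) · ∑_{k=1}^{n−1} (n − k) φ^k. Then S > 0 if φ > 0, and S < 0 if φ < 0. -/
import Mathlib

open Finset

lemma geomneg (φ : ℝ) (hφ : φ < 0) (hφ1 : |φ| < 1) (m : ℕ) (hm : 1 ≤ m) :
    ∑ k ∈ Finset.Icc 1 m, φ ^ k < 0 := by
  have h1 : φ ≠ 1 := by linarith
  have hlt : φ ^ m < 1 := by
    calc φ ^ m ≤ |φ ^ m| := le_abs_self _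
    _ = |φ| ^ m := abs_pow φ m
    _ < 1 := pow_lt_one₀ (abs_nonneg _) hφ1 (by omega)
  have hr : (0:ℝ) < ∑ k ∈ Finset.range m, φ ^ k := by
    rw [geom_sum_eq h1]
    apply div_pos_of_neg_of_neg <;> linarith
  have : ∑ k ∈ Finset.Icc 1 m, φ ^ k = φ * ∑ k ∈ Finset.range m, φ ^ k := by
    rw [Finset.mul_sum]
    rw [show Finset.Icc 1 m = Finset.Ico 1 (m+1) from rfl]
    rw [Finset.sum_Ico_eq_sum_range]
    simp [pow_succ, mul_comm, pow_add]
  rw [this]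
  exact mul_neg_of_neg_of_pos hφ hr

lemma sumneg (φ : ℝ) (hφ : φ < 0) (hφ1 : |φ| < 1) :
    ∀ n : ℕ, 2 ≤ n → ∑ k ∈ Finset.Icc 1 (n - 1), ((n : ℝ) - (k : ℝ)) * φ ^ k < 0 := by
  intro n hn2
  induction n, hn2 using Nat.le_induction with
  | base => simp; linarith
  | succ n hn ih =>
    have hih := ih
    have h1 : n + 1 - 1 = n := rfl
    rw [h1]
    have hsplit : ∑ k ∈ Finset.Icc 1 n, ((n:ℝ) + 1 - (k:ℝ)) * φ ^ k
        = (∑ k ∈ Finset.Icc 1 n, ((n:ℝ) - (k:ℝ)) * φ ^ k)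
          + ∑ k ∈ Finset.Icc 1 n, φ ^ k := by
      rw [← Finset.sum_add_distrib]; apply Finset.sum_congr rfl; intro k _; ring
    have hn1 : n - 1 + 1 = n := by omega
    have htop : ∑ k ∈ Finset.Icc 1 n, ((n:ℝ) - (k:ℝ)) * φ ^ k
        = (∑ k ∈ Finset.Icc 1 (n-1), ((n:ℝ) - (k:ℝ)) * φ ^ k)
          + ((n:ℝ) - (n:ℝ)) * φ ^ n := by
      rw [← hn1, Finset.sum_Icc_succ_top (by omega)]
      simp [hn1]
    have hg := geomneg φ hφ hφ1 n (by omega)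
    push_cast
    rw [hsplit, htop]
    simp only [sub_self, zero_mul, add_zero]
    linarith

theorem stmt10 (β : ℤ) (hβ : 2 ≤ β ∨ β ≤ -1) (σ : ℝ) (hσ : 0 < σ)
    (φ : ℝ) (hφ0 : 0 < |φ|) (hφ1 : |φ| < 1) (n : ℕ) (hn : 2 ≤ n) :
    (0 < φ →
      0 < (β : ℝ) * ((β : ℝ) - 1) * (σ ^ 2 / (1 - φ ^ 2))
            * ∑ k ∈ Finset.Icc 1 (n - 1), ((n : ℝ) - (k : ℝ)) * φ ^ k)
    ∧ (φ < 0 →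
      (β : ℝ) * ((β : ℝ) - 1) * (σ ^ 2 / (1 - φ ^ 2))
            * ∑ k ∈ Finset.Icc 1 (n - 1), ((n : ℝ) - (k : ℝ)) * φ ^ k < 0) := by
  have hββ : 0 < (β : ℝ) * ((β : ℝ) - 1) := by
    rcases hβ with h | h
    · have : (2:ℝ) ≤ (β:ℝ) := by exact_mod_cast h
      nlinarith
    · have : (β:ℝ) ≤ -1 := by exact_mod_cast h
      nlinarith
  have hφ2 : φ ^ 2 < 1 := by
    have := sq_abs φ
    nlinarith
  have hc : 0 < (β : ℝ) * ((β : ℝ) - 1) * (σ ^ 2 / (1 - φ ^ 2)) := by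
    have : 0 < σ ^ 2 / (1 - φ ^ 2) := by
      apply div_pos (by positivity) (by linarith)
    positivity
  constructor
  · intro hp
    have hsum : 0 < ∑ k ∈ Finset.Icc 1 (n - 1), ((n : ℝ) - (k : ℝ)) * φ ^ k := by
      apply Finset.sum_pos
      · intro k hk
        simp only [Finset.mem_Icc] at hk
        have : (k:ℝ) < (n:ℝ) := by exact_mod_cast (by omega : k < n)
        have : 0 < (n:ℝ) - (k:ℝ) := by linarith
        positivity
      · exact ⟨1, by simp [Finset.mem_Icc]; omega⟩
    positivity
  · intro hneg
    exact mul_neg_of_pos_of_neg hc (sumneg φ hneg hφ1 n hn)
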